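/- Let A be a type and let α, β, γ, δ be setoids on A forming a pentagon N5. Form the duplication A(γ) over γ. Then in Setoid (A(γ)) one has γ₀ = γ₁ = η₀ ⊔ η₁, α₀ = α₁, δ₀ = δ₁ = β₀ ⊔ γ₀ = β₀ ⊔ β₁, β₀ = η₀ ⊔ (β₀ ⊓ β₁), β₁ = η₁ ⊔ (β₀ ⊓ β₁), β₀ ⊓ γ₀ = η₀, β₁ ⊓ γ₀ = η₁, α₀ ⊓ β₀ = η₀, (β₀ ⊓ β₁) ⊓ η₀ = ⊥, (β₀ ⊓ β₁) ⊔ γ₀ = δ₀, and the nine setoids ⊥, η₀, η₁, β₀ ⊓ β₁, β₀, β₁, γ₀, α₀, δ₀ are pairwise distinct and form a set closed under ⊓ and ⊔ (a sublattice isomorphic to the lattice L₁₄ of the paper's Figure 3). -/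

import Mathlib

/-! Common setup: the lattice `Setoid A` of equivalence relations on `A`,
the duplication `Dup β = {p : A × A // β p.1 p.2}`, the lifted setoids
`lift0 β θ = θ₀`, `lift1 β θ = θ₁`, the projection kernels `ker0 β = η₀`,
`ker1 β = η₁`, and relational composition `rc`. -/

variable {A : Type*}

/-- The duplication `A(β)`. -/
def Dup (β : Setoid A) : Type _ := {p : A × A // β p.1 p.2}

/-- `θ₀`: relate two elements of `A(β)` iff `θ` relates their first coordinates. -/
def lift0 (β θ : Setoid A) : Setoid (Dup β) :=
  ⟨fun x y => θ x.1.1 y.1.1,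
   ⟨fun _ => θ.refl' _, fun h => θ.symm' h, fun h h' => θ.trans' h h'⟩⟩

/-- `θ₁`: relate two elements of `A(β)` iff `θ` relates their second coordinates. -/
def lift1 (β θ : Setoid A) : Setoid (Dup β) :=
  ⟨fun x y => θ x.1.2 y.1.2,
   ⟨fun _ => θ.refl' _, fun h => θ.symm' h, fun h h' => θ.trans' h h'⟩⟩

/-- `η₀`: kernel of the first projection. -/
def ker0 (β : Setoid A) : Setoid (Dup β) :=
  ⟨fun x y => x.1.1 = y.1.1, ⟨fun _ => rfl, Eq.symm, Eq.trans⟩⟩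

/-- `η₁`: kernel of the second projection. -/
def ker1 (β : Setoid A) : Setoid (Dup β) :=
  ⟨fun x y => x.1.2 = y.1.2, ⟨fun _ => rfl, Eq.symm, Eq.trans⟩⟩

/-- Relational composition. -/
def rc {B : Type*} (r s : B → B → Prop) : B → B → Prop :=
  fun a b => ∃ c, r a c ∧ s c b

/-- `α, β, γ, δ` form a pentagon `N₅` in `Setoid A`. -/
def IsN5 (α β γ δ : Setoid A) : Prop :=
  ⊥ < γ ∧ γ < α ∧ α < δ ∧ α ⊓ β = ⊥ ∧ γ ⊔ β = δ ∧ α ⊔ β = δ ∧ β ≠ ⊥ ∧ β ≠ δ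

theorem srne {B : Type*} {r s : Setoid B} {x y : B} (h1 : r x y) (h2 : ¬ s x y) : r ≠ s :=
  fun e => h2 (e ▸ h1)

theorem rel_of_le {B : Type*} {r s : Setoid B} (h : r ≤ s) {x y : B} (hxy : r x y) : s x y :=
  h hxy

def diag (γ : Setoid A) (c : A) : Dup γ := ⟨(c, c), γ.refl' c⟩

theorem ker0_le_lift0 (γ θ : Setoid A) : ker0 γ ≤ lift0 γ θ := by
  intro x y h
  have h' : x.1.1 = y.1.1 := h
  show θ x.1.1 y.1.1
  rw [h']

theorem ker1_le_lift1 (γ θ : Setoid A) : ker1 γ ≤ lift1 γ θ := by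
  intro x y h
  have h' : x.1.2 = y.1.2 := h
  show θ x.1.2 y.1.2
  rw [h']

theorem ker1_le_lift0 (γ θ : Setoid A) (hγθ : γ ≤ θ) : ker1 γ ≤ lift0 γ θ := by
  intro x y h
  have h' : x.1.2 = y.1.2 := h
  have h2 : θ x.1.2 y.1.1 := by rw [h']; exact θ.symm' (hγθ y.2)
  exact θ.trans' (hγθ x.2) h2

theorem lift0_mono (γ : Setoid A) {r s : Setoid A} (h : r ≤ s) : lift0 γ r ≤ lift0 γ s := by
  intro x y hxy
  exact h hxy

theorem lift1_mono (γ : Setoid A) {r s : Setoid A} (h : r ≤ s) : lift1 γ r ≤ lift1 γ s := by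
  intro x y hxy
  exact h hxy

theorem lift0_eq_lift1 (γ : Setoid A) {θ : Setoid A} (h : γ ≤ θ) : lift0 γ θ = lift1 γ θ := by
  ext x y
  constructor
  · intro hxy
    exact θ.trans' (θ.symm' (h x.2)) (θ.trans' hxy (h y.2))
  · intro hxy
    exact θ.trans' (h x.2) (θ.trans' hxy (θ.symm' (h y.2)))

theorem lift0_gamma (γ : Setoid A) : lift0 γ γ = ker0 γ ⊔ ker1 γ := by
  apply le_antisymm
  · intro x y hxy
    have h1 : (ker0 γ ⊔ ker1 γ) x ⟨(x.1.1, y.1.2), γ.trans' hxy y.2⟩ :=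
      rel_of_le le_sup_left rfl
    have h2 : (ker0 γ ⊔ ker1 γ) ⟨(x.1.1, y.1.2), γ.trans' hxy y.2⟩ y :=
      rel_of_le le_sup_right rfl
    exact Setoid.trans' _ h1 h2
  · exact sup_le (ker0_le_lift0 γ γ) (ker1_le_lift0 γ γ le_rfl)

open Relation in
theorem lift0_sup (γ r s : Setoid A) : lift0 γ (r ⊔ s) = lift0 γ r ⊔ lift0 γ s := by
  apply le_antisymm
  · intro x y hxy
    have key : ∀ p q : A, EqvGen (fun a b => r a b ∨ s a b) p q →
        (lift0 γ r ⊔ lift0 γ s) (diag γ p) (diag γ q) := by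
      intro p q hpq
      induction hpq with
      | rel p q h =>
        rcases h with h | h
        · exact rel_of_le le_sup_left h
        · exact rel_of_le le_sup_right h
      | refl p => exact Setoid.refl' _ _
      | symm _ _ _ ih => exact Setoid.symm' _ ih
      | trans _ _ _ _ _ ih1 ih2 => exact Setoid.trans' _ ih1 ih2
    have hxy' : (r ⊔ s) x.1.1 y.1.1 := hxy
    rw [Setoid.sup_eq_eqvGen] at hxy'
    have h1 : (lift0 γ r ⊔ lift0 γ s) x (diag γ x.1.1) :=
      rel_of_le le_sup_left (rel_of_le (ker0_le_lift0 γ r) rfl)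
    have h2 : (lift0 γ r ⊔ lift0 γ s) (diag γ y.1.1) y :=
      rel_of_le le_sup_left (rel_of_le (ker0_le_lift0 γ r) rfl)
    exact Setoid.trans' _ h1 (Setoid.trans' _ (key _ _ hxy') h2)
  · exact sup_le (lift0_mono γ le_sup_left) (lift0_mono γ le_sup_right)

theorem lift0_beta_decomp (γ β : Setoid A) :
    lift0 γ β = ker0 γ ⊔ (lift0 γ β ⊓ lift1 γ β) := by
  apply le_antisymm
  · intro x y hxy
    have h1 : (ker0 γ ⊔ (lift0 γ β ⊓ lift1 γ β)) x (diag γ x.1.1) :=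
      rel_of_le le_sup_left rfl
    have h2 : (ker0 γ ⊔ (lift0 γ β ⊓ lift1 γ β)) (diag γ x.1.1) (diag γ y.1.1) :=
      rel_of_le le_sup_right ⟨hxy, hxy⟩
    have h3 : (ker0 γ ⊔ (lift0 γ β ⊓ lift1 γ β)) (diag γ y.1.1) y :=
      rel_of_le le_sup_left rfl
    exact Setoid.trans' _ h1 (Setoid.trans' _ h2 h3)
  · exact sup_le (ker0_le_lift0 γ β) inf_le_left

theorem lift1_beta_decomp (γ β : Setoid A) :
    lift1 γ β = ker1 γ ⊔ (lift0 γ β ⊓ lift1 γ β) := by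
  apply le_antisymm
  · intro x y hxy
    have h1 : (ker1 γ ⊔ (lift0 γ β ⊓ lift1 γ β)) x (diag γ x.1.2) :=
      rel_of_le le_sup_left rfl
    have h2 : (ker1 γ ⊔ (lift0 γ β ⊓ lift1 γ β)) (diag γ x.1.2) (diag γ y.1.2) :=
      rel_of_le le_sup_right ⟨hxy, hxy⟩
    have h3 : (ker1 γ ⊔ (lift0 γ β ⊓ lift1 γ β)) (diag γ y.1.2) y :=
      rel_of_le le_sup_left rfl
    exact Setoid.trans' _ h1 (Setoid.trans' _ h2 h3)
  · exact sup_le (ker1_le_lift1 γ β) inf_le_right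

/-- the lattice `L₁₄` inside `Setoid (A(γ))`, Figure 3. -/
theorem L14_sublattice (α β γ δ : Setoid A) (h : IsN5 α β γ δ) :
    lift0 γ γ = lift1 γ γ ∧
    lift0 γ γ = ker0 γ ⊔ ker1 γ ∧
    lift0 γ α = lift1 γ α ∧
    lift0 γ δ = lift1 γ δ ∧
    lift0 γ δ = lift0 γ β ⊔ lift0 γ γ ∧
    lift0 γ δ = lift0 γ β ⊔ lift1 γ β ∧
    lift0 γ β = ker0 γ ⊔ (lift0 γ β ⊓ lift1 γ β) ∧
    lift1 γ β = ker1 γ ⊔ (lift0 γ β ⊓ lift1 γ β) ∧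
    lift0 γ β ⊓ lift0 γ γ = ker0 γ ∧
    lift1 γ β ⊓ lift0 γ γ = ker1 γ ∧
    lift0 γ α ⊓ lift0 γ β = ker0 γ ∧
    (lift0 γ β ⊓ lift1 γ β) ⊓ ker0 γ = ⊥ ∧
    (lift0 γ β ⊓ lift1 γ β) ⊔ lift0 γ γ = lift0 γ δ ∧
    [(⊥ : Setoid (Dup γ)), ker0 γ, ker1 γ, lift0 γ β ⊓ lift1 γ β,
      lift0 γ β, lift1 γ β, lift0 γ γ, lift0 γ α, lift0 γ δ].Pairwise (· ≠ ·) ∧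
    (∀ x ∈ ({⊥, ker0 γ, ker1 γ, lift0 γ β ⊓ lift1 γ β,
        lift0 γ β, lift1 γ β, lift0 γ γ, lift0 γ α, lift0 γ δ} : Set (Setoid (Dup γ))),
      ∀ y ∈ ({⊥, ker0 γ, ker1 γ, lift0 γ β ⊓ lift1 γ β,
        lift0 γ β, lift1 γ β, lift0 γ γ, lift0 γ α, lift0 γ δ} : Set (Setoid (Dup γ))),
      x ⊓ y ∈ ({⊥, ker0 γ, ker1 γ, lift0 γ β ⊓ lift1 γ β,
        lift0 γ β, lift1 γ β, lift0 γ γ, lift0 γ α, lift0 γ δ} : Set (Setoid (Dup γ))) ∧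
      x ⊔ y ∈ ({⊥, ker0 γ, ker1 γ, lift0 γ β ⊓ lift1 γ β,
        lift0 γ β, lift1 γ β, lift0 γ γ, lift0 γ α, lift0 γ δ} : Set (Setoid (Dup γ)))) := by
  obtain ⟨hγ0, hγα, hαδ, hαβ, hγβδ, hαβδ, hβ0, hβδ⟩ := h
  have hγαle : γ ≤ α := hγα.le
  have hαδle : α ≤ δ := hαδ.le
  have hγδle : γ ≤ δ := hγαle.trans hαδle
  have hβδle : β ≤ δ := hγβδ ▸ le_sup_right
  have c1 : lift0 γ γ = lift1 γ γ := lift0_eq_lift1 γ le_rfl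
  have c2 : lift0 γ γ = ker0 γ ⊔ ker1 γ := lift0_gamma γ
  have c3 : lift0 γ α = lift1 γ α := lift0_eq_lift1 γ hγαle
  have c4 : lift0 γ δ = lift1 γ δ := lift0_eq_lift1 γ hγδle
  have c5 : lift0 γ δ = lift0 γ β ⊔ lift0 γ γ := by
    rw [← hγβδ, lift0_sup]
    exact sup_comm _ _
  have c7 : lift0 γ β = ker0 γ ⊔ (lift0 γ β ⊓ lift1 γ β) := lift0_beta_decomp γ β
  have c8 : lift1 γ β = ker1 γ ⊔ (lift0 γ β ⊓ lift1 γ β) := lift1_beta_decomp γ β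
  have le48 : lift0 γ β ≤ lift0 γ δ := lift0_mono γ hβδle
  have le58 : lift1 γ β ≤ lift0 γ δ := by rw [c4]; exact lift1_mono γ hβδle
  have le14 : ker0 γ ≤ lift0 γ β := ker0_le_lift0 γ β
  have le16 : ker0 γ ≤ lift0 γ γ := ker0_le_lift0 γ γ
  have le17 : ker0 γ ≤ lift0 γ α := ker0_le_lift0 γ α
  have le18 : ker0 γ ≤ lift0 γ δ := ker0_le_lift0 γ δ
  have le25 : ker1 γ ≤ lift1 γ β := ker1_le_lift1 γ β
  have le26 : ker1 γ ≤ lift0 γ γ := ker1_le_lift0 γ γ le_rfl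
  have le27 : ker1 γ ≤ lift0 γ α := ker1_le_lift0 γ α hγαle
  have le28 : ker1 γ ≤ lift0 γ δ := ker1_le_lift0 γ δ hγδle
  have le34 : lift0 γ β ⊓ lift1 γ β ≤ lift0 γ β := inf_le_left
  have le35 : lift0 γ β ⊓ lift1 γ β ≤ lift1 γ β := inf_le_right
  have le38 : lift0 γ β ⊓ lift1 γ β ≤ lift0 γ δ := le34.trans le48
  have le67 : lift0 γ γ ≤ lift0 γ α := lift0_mono γ hγαle
  have le78 : lift0 γ α ≤ lift0 γ δ := lift0_mono γ hαδle
  have le68 : lift0 γ γ ≤ lift0 γ δ := le67.trans le78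
  have c6 : lift0 γ δ = lift0 γ β ⊔ lift1 γ β := by
    apply le_antisymm
    · rw [c5]
      apply sup_le le_sup_left
      rw [c2]
      exact sup_le ((ker0_le_lift0 γ β).trans le_sup_left)
        ((ker1_le_lift1 γ β).trans le_sup_right)
    · exact sup_le le48 le58
  have hβγbot : β ⊓ γ = ⊥ := by
    have h1 : β ⊓ γ ≤ α ⊓ β := le_inf (inf_le_right.trans hγαle) inf_le_left
    rw [hαβ] at h1
    exact le_bot_iff.mp h1
  have kk : ∀ {x y : Dup γ}, x.1.1 = y.1.1 → x.1.2 = y.1.2 → x = y := by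
    intro x y h1 h2
    exact Subtype.ext (Prod.ext_iff.mpr ⟨h1, h2⟩)
  have keyB : ∀ {x y : Dup γ}, x.1.1 = y.1.1 → β x.1.2 y.1.2 → x = y := by
    intro x y h1 hb
    have hg1 : γ x.1.1 y.1.2 := by rw [h1]; exact y.2
    have hg : γ x.1.2 y.1.2 := γ.trans' (γ.symm' x.2) hg1
    have hbg : (β ⊓ γ) x.1.2 y.1.2 := ⟨hb, hg⟩
    rw [hβγbot] at hbg
    exact kk h1 hbg
  have keyB' : ∀ {x y : Dup γ}, x.1.2 = y.1.2 → β x.1.1 y.1.1 → x = y := by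
    intro x y h2 hb
    have hg1 : γ x.1.1 y.1.2 := γ.trans' x.2 (h2 ▸ γ.refl' x.1.2)
    have hg : γ x.1.1 y.1.1 := γ.trans' hg1 (γ.symm' y.2)
    have hbg : (β ⊓ γ) x.1.1 y.1.1 := ⟨hb, hg⟩
    rw [hβγbot] at hbg
    exact kk hbg h2
  have c9 : lift0 γ β ⊓ lift0 γ γ = ker0 γ := by
    apply le_antisymm
    · intro x y hxy
      obtain ⟨hb, hg⟩ : β x.1.1 y.1.1 ∧ γ x.1.1 y.1.1 := hxy
      have : (β ⊓ γ) x.1.1 y.1.1 := ⟨hb, hg⟩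
      rw [hβγbot] at this
      exact this
    · exact le_inf le14 le16
  have c10 : lift1 γ β ⊓ lift0 γ γ = ker1 γ := by
    apply le_antisymm
    · intro x y hxy
      obtain ⟨hb, hg⟩ : β x.1.2 y.1.2 ∧ γ x.1.1 y.1.1 := hxy
      have hg2 : γ x.1.2 y.1.2 :=
        γ.trans' (γ.symm' x.2) (γ.trans' hg y.2)
      have : (β ⊓ γ) x.1.2 y.1.2 := ⟨hb, hg2⟩
      rw [hβγbot] at this
      exact this
    · exact le_inf le25 le26
  have c11 : lift0 γ α ⊓ lift0 γ β = ker0 γ := by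
    apply le_antisymm
    · intro x y hxy
      obtain ⟨ha, hb⟩ : α x.1.1 y.1.1 ∧ β x.1.1 y.1.1 := hxy
      have : (α ⊓ β) x.1.1 y.1.1 := ⟨ha, hb⟩
      rw [hαβ] at this
      exact this
    · exact le_inf le17 le14
  have c12 : (lift0 γ β ⊓ lift1 γ β) ⊓ ker0 γ = ⊥ := by
    apply le_antisymm _ bot_le
    intro x y hxy
    obtain ⟨⟨hb0, hb1⟩, h0⟩ :
        (β x.1.1 y.1.1 ∧ β x.1.2 y.1.2) ∧ x.1.1 = y.1.1 := hxy
    show x = y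
    exact keyB h0 hb1
  have c13 : (lift0 γ β ⊓ lift1 γ β) ⊔ lift0 γ γ = lift0 γ δ := by
    apply le_antisymm
    · exact sup_le le38 le68
    · rw [c5]
      apply sup_le _ le_sup_right
      exact le_of_eq_of_le c7 (sup_le (le16.trans le_sup_right) le_sup_left)
  have iq12 : ker0 γ ⊓ ker1 γ = (⊥ : Setoid (Dup γ)) := by
    apply le_antisymm _ bot_le
    intro x y hxy
    obtain ⟨h1, h2⟩ : x.1.1 = y.1.1 ∧ x.1.2 = y.1.2 := hxy
    show x = y
    exact kk h1 h2
  have iq13 : ker0 γ ⊓ (lift0 γ β ⊓ lift1 γ β) = (⊥ : Setoid (Dup γ)) := by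
    apply le_antisymm _ bot_le
    intro x y hxy
    obtain ⟨h1, _, h3⟩ :
        x.1.1 = y.1.1 ∧ β x.1.1 y.1.1 ∧ β x.1.2 y.1.2 := hxy
    show x = y
    exact keyB h1 h3
  have iq15 : ker0 γ ⊓ lift1 γ β = (⊥ : Setoid (Dup γ)) := by
    apply le_antisymm _ bot_le
    intro x y hxy
    obtain ⟨h1, h2⟩ : x.1.1 = y.1.1 ∧ β x.1.2 y.1.2 := hxy
    show x = y
    exact keyB h1 h2
  have iq23 : ker1 γ ⊓ (lift0 γ β ⊓ lift1 γ β) = (⊥ : Setoid (Dup γ)) := by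
    apply le_antisymm _ bot_le
    intro x y hxy
    obtain ⟨h1, h2, _⟩ :
        x.1.2 = y.1.2 ∧ β x.1.1 y.1.1 ∧ β x.1.2 y.1.2 := hxy
    show x = y
    exact keyB' h1 h2
  have iq24 : ker1 γ ⊓ lift0 γ β = (⊥ : Setoid (Dup γ)) := by
    apply le_antisymm _ bot_le
    intro x y hxy
    obtain ⟨h1, h2⟩ : x.1.2 = y.1.2 ∧ β x.1.1 y.1.1 := hxy
    show x = y
    exact keyB' h1 h2
  have iq36 : (lift0 γ β ⊓ lift1 γ β) ⊓ lift0 γ γ = (⊥ : Setoid (Dup γ)) := by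
    apply le_antisymm _ bot_le
    intro x y hxy
    obtain ⟨⟨hb0, hb1⟩, hg⟩ :
        (β x.1.1 y.1.1 ∧ β x.1.2 y.1.2) ∧ γ x.1.1 y.1.1 := hxy
    have h1 : (β ⊓ γ) x.1.1 y.1.1 := ⟨hb0, hg⟩
    rw [hβγbot] at h1
    show x = y
    exact keyB h1 hb1
  have iq37 : (lift0 γ β ⊓ lift1 γ β) ⊓ lift0 γ α = (⊥ : Setoid (Dup γ)) := by
    apply le_antisymm _ bot_le
    intro x y hxy
    obtain ⟨⟨hb0, hb1⟩, ha⟩ :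
        (β x.1.1 y.1.1 ∧ β x.1.2 y.1.2) ∧ α x.1.1 y.1.1 := hxy
    have h1 : (α ⊓ β) x.1.1 y.1.1 := ⟨ha, hb0⟩
    rw [hαβ] at h1
    show x = y
    exact keyB h1 hb1
  have iq46 : lift0 γ β ⊓ lift0 γ γ = ker0 γ := c9
  have iq47 : lift0 γ β ⊓ lift0 γ α = ker0 γ := by
    rw [inf_comm]
    exact c11
  have iq56 : lift1 γ β ⊓ lift0 γ γ = ker1 γ := c10
  have iq57 : lift1 γ β ⊓ lift0 γ α = ker1 γ := by
    apply le_antisymm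
    · intro x y hxy
      obtain ⟨hb, ha⟩ : β x.1.2 y.1.2 ∧ α x.1.1 y.1.1 := hxy
      have ha2 : α x.1.2 y.1.2 :=
        α.trans' (α.symm' (hγαle x.2)) (α.trans' ha (hγαle y.2))
      have : (α ⊓ β) x.1.2 y.1.2 := ⟨ha2, hb⟩
      rw [hαβ] at this
      exact this
    · exact le_inf le25 le27
  have sq12 : ker0 γ ⊔ ker1 γ = lift0 γ γ := c2.symm
  have sq13 : ker0 γ ⊔ (lift0 γ β ⊓ lift1 γ β) = lift0 γ β := c7.symm
  have sq15 : ker0 γ ⊔ lift1 γ β = lift0 γ δ := by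
    apply le_antisymm (sup_le le18 le58)
    rw [c6]
    refine sup_le ?_ le_sup_right
    rw [c7]
    exact sup_le le_sup_left (le35.trans le_sup_right)
  have sq23 : ker1 γ ⊔ (lift0 γ β ⊓ lift1 γ β) = lift1 γ β := c8.symm
  have sq24 : ker1 γ ⊔ lift0 γ β = lift0 γ δ := by
    apply le_antisymm (sup_le le28 le48)
    rw [c6]
    refine sup_le le_sup_right ?_
    rw [c8]
    exact sup_le le_sup_left (le34.trans le_sup_right)
  have sq36 : (lift0 γ β ⊓ lift1 γ β) ⊔ lift0 γ γ = lift0 γ δ := c13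
  have sq37 : (lift0 γ β ⊓ lift1 γ β) ⊔ lift0 γ α = lift0 γ δ := by
    apply le_antisymm (sup_le le38 le78)
    rw [← c13]
    exact sup_le_sup_left le67 _
  have sq45 : lift0 γ β ⊔ lift1 γ β = lift0 γ δ := c6.symm
  have sq46 : lift0 γ β ⊔ lift0 γ γ = lift0 γ δ := c5.symm
  have sq47 : lift0 γ β ⊔ lift0 γ α = lift0 γ δ := by
    apply le_antisymm (sup_le le48 le78)
    rw [c5]
    exact sup_le_sup_left le67 _
  have sq56 : lift1 γ β ⊔ lift0 γ γ = lift0 γ δ := by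
    apply le_antisymm (sup_le le58 le68)
    rw [← c13]
    exact sup_le (le35.trans le_sup_left) le_sup_right
  have sq57 : lift1 γ β ⊔ lift0 γ α = lift0 γ δ := by
    apply le_antisymm (sup_le le58 le78)
    rw [← c13]
    exact sup_le (le35.trans le_sup_left) (le67.trans le_sup_right)
  obtain ⟨a, b, hab, hne⟩ : ∃ a b, γ a b ∧ a ≠ b := by
    by_contra hc
    push_neg at hc
    exact hγ0.not_ge fun x y hxy => hc x y hxy
  obtain ⟨c, d, hcd, hncd⟩ : ∃ c d, α c d ∧ ¬ γ c d := by
    by_contra hc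
    push_neg at hc
    exact hγα.not_ge fun x y hxy => hc x y hxy
  obtain ⟨e, f, hef, hnef⟩ : ∃ e f, δ e f ∧ ¬ α e f := by
    by_contra hc
    push_neg at hc
    exact hαδ.not_ge fun x y hxy => hc x y hxy
  obtain ⟨u, v, huv, huvne⟩ : ∃ u v, β u v ∧ u ≠ v := by
    by_contra hc
    push_neg at hc
    exact hβ0 (le_bot_iff.mp fun x y hxy => hc x y hxy)
  have hnab : ¬ β a b := by
    intro hb
    have h1 : (α ⊓ β) a b := ⟨hγαle hab, hb⟩
    rw [hαβ] at h1
    exact hne h1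
  have hnba : ¬ β b a := fun hb => hnab (β.symm' hb)
  have hnγuv : ¬ γ u v := by
    intro hg
    have h1 : (α ⊓ β) u v := ⟨hγαle hg, huv⟩
    rw [hαβ] at h1
    exact huvne h1
  have hnαuv : ¬ α u v := by
    intro ha
    have h1 : (α ⊓ β) u v := ⟨ha, huv⟩
    rw [hαβ] at h1
    exact huvne h1
  have D01 : (⊥ : Setoid (Dup γ)) ≠ ker0 γ :=
    (srne (show (ker0 γ) (⟨(a, b), hab⟩ : Dup γ) (⟨(a, a), γ.refl' a⟩ : Dup γ) from rfl)
      (show ¬ ((⊥ : Setoid (Dup γ))) (⟨(a, b), hab⟩ : Dup γ) (⟨(a, a), γ.refl' a⟩ : Dup γ) from fun hh => hne ((show b = a from rel_of_le (bot_le : (⊥ : Setoid (Dup γ)) ≤ ker1 γ) hh).symm))).symm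
  have D02 : (⊥ : Setoid (Dup γ)) ≠ ker1 γ :=
    (srne (show (ker1 γ) (⟨(b, a), γ.symm' hab⟩ : Dup γ) (⟨(a, a), γ.refl' a⟩ : Dup γ) from rfl)
      (show ¬ ((⊥ : Setoid (Dup γ))) (⟨(b, a), γ.symm' hab⟩ : Dup γ) (⟨(a, a), γ.refl' a⟩ : Dup γ) from fun hh => hne ((show b = a from rel_of_le (bot_le : (⊥ : Setoid (Dup γ)) ≤ ker0 γ) hh).symm))).symm
  have D03 : (⊥ : Setoid (Dup γ)) ≠ (lift0 γ β ⊓ lift1 γ β) :=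
    (srne (show ((lift0 γ β ⊓ lift1 γ β)) (⟨(u, u), γ.refl' u⟩ : Dup γ) (⟨(v, v), γ.refl' v⟩ : Dup γ) from ⟨huv, huv⟩)
      (show ¬ ((⊥ : Setoid (Dup γ))) (⟨(u, u), γ.refl' u⟩ : Dup γ) (⟨(v, v), γ.refl' v⟩ : Dup γ) from fun hh => huvne ((show u = v from rel_of_le (bot_le : (⊥ : Setoid (Dup γ)) ≤ ker0 γ) hh)))).symm
  have D04 : (⊥ : Setoid (Dup γ)) ≠ lift0 γ β :=
    (srne (show (lift0 γ β) (⟨(u, u), γ.refl' u⟩ : Dup γ) (⟨(v, v), γ.refl' v⟩ : Dup γ) from huv)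
      (show ¬ ((⊥ : Setoid (Dup γ))) (⟨(u, u), γ.refl' u⟩ : Dup γ) (⟨(v, v), γ.refl' v⟩ : Dup γ) from fun hh => huvne ((show u = v from rel_of_le (bot_le : (⊥ : Setoid (Dup γ)) ≤ ker0 γ) hh)))).symm
  have D05 : (⊥ : Setoid (Dup γ)) ≠ lift1 γ β :=
    (srne (show (lift1 γ β) (⟨(u, u), γ.refl' u⟩ : Dup γ) (⟨(v, v), γ.refl' v⟩ : Dup γ) from huv)
      (show ¬ ((⊥ : Setoid (Dup γ))) (⟨(u, u), γ.refl' u⟩ : Dup γ) (⟨(v, v), γ.refl' v⟩ : Dup γ) from fun hh => huvne ((show u = v from rel_of_le (bot_le : (⊥ : Setoid (Dup γ)) ≤ ker0 γ) hh)))).symm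
  have D06 : (⊥ : Setoid (Dup γ)) ≠ lift0 γ γ :=
    (srne (show (lift0 γ γ) (⟨(a, a), γ.refl' a⟩ : Dup γ) (⟨(b, b), γ.refl' b⟩ : Dup γ) from hab)
      (show ¬ ((⊥ : Setoid (Dup γ))) (⟨(a, a), γ.refl' a⟩ : Dup γ) (⟨(b, b), γ.refl' b⟩ : Dup γ) from fun hh => hne ((show a = b from rel_of_le (bot_le : (⊥ : Setoid (Dup γ)) ≤ ker0 γ) hh)))).symm
  have D07 : (⊥ : Setoid (Dup γ)) ≠ lift0 γ α :=
    (srne (show (lift0 γ α) (⟨(a, a), γ.refl' a⟩ : Dup γ) (⟨(b, b), γ.refl' b⟩ : Dup γ) from hγαle hab)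
      (show ¬ ((⊥ : Setoid (Dup γ))) (⟨(a, a), γ.refl' a⟩ : Dup γ) (⟨(b, b), γ.refl' b⟩ : Dup γ) from fun hh => hne ((show a = b from rel_of_le (bot_le : (⊥ : Setoid (Dup γ)) ≤ ker0 γ) hh)))).symm
  have D08 : (⊥ : Setoid (Dup γ)) ≠ lift0 γ δ :=
    (srne (show (lift0 γ δ) (⟨(a, a), γ.refl' a⟩ : Dup γ) (⟨(b, b), γ.refl' b⟩ : Dup γ) from hγδle hab)
      (show ¬ ((⊥ : Setoid (Dup γ))) (⟨(a, a), γ.refl' a⟩ : Dup γ) (⟨(b, b), γ.refl' b⟩ : Dup γ) from fun hh => hne ((show a = b from rel_of_le (bot_le : (⊥ : Setoid (Dup γ)) ≤ ker0 γ) hh)))).symm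
  have D12 : ker0 γ ≠ ker1 γ :=
    (srne (show (ker0 γ) (⟨(a, b), hab⟩ : Dup γ) (⟨(a, a), γ.refl' a⟩ : Dup γ) from rfl)
      (show ¬ (ker1 γ) (⟨(a, b), hab⟩ : Dup γ) (⟨(a, a), γ.refl' a⟩ : Dup γ) from fun hh => hne ((show b = a from hh).symm)))
  have D13 : ker0 γ ≠ (lift0 γ β ⊓ lift1 γ β) :=
    (srne (show (ker0 γ) (⟨(a, b), hab⟩ : Dup γ) (⟨(a, a), γ.refl' a⟩ : Dup γ) from rfl)
      (show ¬ ((lift0 γ β ⊓ lift1 γ β)) (⟨(a, b), hab⟩ : Dup γ) (⟨(a, a), γ.refl' a⟩ : Dup γ) from fun hh => hnba (show β a a ∧ β b a from hh).2))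
  have D14 : ker0 γ ≠ lift0 γ β :=
    (srne (show (lift0 γ β) (⟨(u, u), γ.refl' u⟩ : Dup γ) (⟨(v, v), γ.refl' v⟩ : Dup γ) from huv)
      (show ¬ (ker0 γ) (⟨(u, u), γ.refl' u⟩ : Dup γ) (⟨(v, v), γ.refl' v⟩ : Dup γ) from fun hh => huvne (show u = v from hh))).symm
  have D15 : ker0 γ ≠ lift1 γ β :=
    (srne (show (lift1 γ β) (⟨(u, u), γ.refl' u⟩ : Dup γ) (⟨(v, v), γ.refl' v⟩ : Dup γ) from huv)
      (show ¬ (ker0 γ) (⟨(u, u), γ.refl' u⟩ : Dup γ) (⟨(v, v), γ.refl' v⟩ : Dup γ) from fun hh => huvne (show u = v from hh))).symm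
  have D16 : ker0 γ ≠ lift0 γ γ :=
    (srne (show (lift0 γ γ) (⟨(a, a), γ.refl' a⟩ : Dup γ) (⟨(b, b), γ.refl' b⟩ : Dup γ) from hab)
      (show ¬ (ker0 γ) (⟨(a, a), γ.refl' a⟩ : Dup γ) (⟨(b, b), γ.refl' b⟩ : Dup γ) from fun hh => hne (show a = b from hh))).symm
  have D17 : ker0 γ ≠ lift0 γ α :=
    (srne (show (lift0 γ α) (⟨(a, a), γ.refl' a⟩ : Dup γ) (⟨(b, b), γ.refl' b⟩ : Dup γ) from hγαle hab)
      (show ¬ (ker0 γ) (⟨(a, a), γ.refl' a⟩ : Dup γ) (⟨(b, b), γ.refl' b⟩ : Dup γ) from fun hh => hne (show a = b from hh))).symm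
  have D18 : ker0 γ ≠ lift0 γ δ :=
    (srne (show (lift0 γ δ) (⟨(a, a), γ.refl' a⟩ : Dup γ) (⟨(b, b), γ.refl' b⟩ : Dup γ) from hγδle hab)
      (show ¬ (ker0 γ) (⟨(a, a), γ.refl' a⟩ : Dup γ) (⟨(b, b), γ.refl' b⟩ : Dup γ) from fun hh => hne (show a = b from hh))).symm
  have D23 : ker1 γ ≠ (lift0 γ β ⊓ lift1 γ β) :=
    (srne (show (ker1 γ) (⟨(b, a), γ.symm' hab⟩ : Dup γ) (⟨(a, a), γ.refl' a⟩ : Dup γ) from rfl)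
      (show ¬ ((lift0 γ β ⊓ lift1 γ β)) (⟨(b, a), γ.symm' hab⟩ : Dup γ) (⟨(a, a), γ.refl' a⟩ : Dup γ) from fun hh => hnba (show β b a ∧ β a a from hh).1))
  have D24 : ker1 γ ≠ lift0 γ β :=
    (srne (show (lift0 γ β) (⟨(u, u), γ.refl' u⟩ : Dup γ) (⟨(v, v), γ.refl' v⟩ : Dup γ) from huv)
      (show ¬ (ker1 γ) (⟨(u, u), γ.refl' u⟩ : Dup γ) (⟨(v, v), γ.refl' v⟩ : Dup γ) from fun hh => huvne (show u = v from hh))).symm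
  have D25 : ker1 γ ≠ lift1 γ β :=
    (srne (show (lift1 γ β) (⟨(u, u), γ.refl' u⟩ : Dup γ) (⟨(v, v), γ.refl' v⟩ : Dup γ) from huv)
      (show ¬ (ker1 γ) (⟨(u, u), γ.refl' u⟩ : Dup γ) (⟨(v, v), γ.refl' v⟩ : Dup γ) from fun hh => huvne (show u = v from hh))).symm
  have D26 : ker1 γ ≠ lift0 γ γ :=
    (srne (show (lift0 γ γ) (⟨(a, a), γ.refl' a⟩ : Dup γ) (⟨(b, b), γ.refl' b⟩ : Dup γ) from hab)
      (show ¬ (ker1 γ) (⟨(a, a), γ.refl' a⟩ : Dup γ) (⟨(b, b), γ.refl' b⟩ : Dup γ) from fun hh => hne (show a = b from hh))).symm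
  have D27 : ker1 γ ≠ lift0 γ α :=
    (srne (show (lift0 γ α) (⟨(a, a), γ.refl' a⟩ : Dup γ) (⟨(b, b), γ.refl' b⟩ : Dup γ) from hγαle hab)
      (show ¬ (ker1 γ) (⟨(a, a), γ.refl' a⟩ : Dup γ) (⟨(b, b), γ.refl' b⟩ : Dup γ) from fun hh => hne (show a = b from hh))).symm
  have D28 : ker1 γ ≠ lift0 γ δ :=
    (srne (show (lift0 γ δ) (⟨(a, a), γ.refl' a⟩ : Dup γ) (⟨(b, b), γ.refl' b⟩ : Dup γ) from hγδle hab)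
      (show ¬ (ker1 γ) (⟨(a, a), γ.refl' a⟩ : Dup γ) (⟨(b, b), γ.refl' b⟩ : Dup γ) from fun hh => hne (show a = b from hh))).symm
  have D34 : (lift0 γ β ⊓ lift1 γ β) ≠ lift0 γ β :=
    (srne (show (lift0 γ β) (⟨(a, b), hab⟩ : Dup γ) (⟨(a, a), γ.refl' a⟩ : Dup γ) from β.refl' a)
      (show ¬ ((lift0 γ β ⊓ lift1 γ β)) (⟨(a, b), hab⟩ : Dup γ) (⟨(a, a), γ.refl' a⟩ : Dup γ) from fun hh => hnba (show β a a ∧ β b a from hh).2)).symm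
  have D35 : (lift0 γ β ⊓ lift1 γ β) ≠ lift1 γ β :=
    (srne (show (lift1 γ β) (⟨(b, a), γ.symm' hab⟩ : Dup γ) (⟨(a, a), γ.refl' a⟩ : Dup γ) from β.refl' a)
      (show ¬ ((lift0 γ β ⊓ lift1 γ β)) (⟨(b, a), γ.symm' hab⟩ : Dup γ) (⟨(a, a), γ.refl' a⟩ : Dup γ) from fun hh => hnba (show β b a ∧ β a a from hh).1)).symm
  have D36 : (lift0 γ β ⊓ lift1 γ β) ≠ lift0 γ γ :=
    (srne (show (lift0 γ γ) (⟨(a, a), γ.refl' a⟩ : Dup γ) (⟨(b, b), γ.refl' b⟩ : Dup γ) from hab)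
      (show ¬ ((lift0 γ β ⊓ lift1 γ β)) (⟨(a, a), γ.refl' a⟩ : Dup γ) (⟨(b, b), γ.refl' b⟩ : Dup γ) from fun hh => hnab (show β a b ∧ β a b from hh).1)).symm
  have D37 : (lift0 γ β ⊓ lift1 γ β) ≠ lift0 γ α :=
    (srne (show (lift0 γ α) (⟨(a, a), γ.refl' a⟩ : Dup γ) (⟨(b, b), γ.refl' b⟩ : Dup γ) from hγαle hab)
      (show ¬ ((lift0 γ β ⊓ lift1 γ β)) (⟨(a, a), γ.refl' a⟩ : Dup γ) (⟨(b, b), γ.refl' b⟩ : Dup γ) from fun hh => hnab (show β a b ∧ β a b from hh).1)).symm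
  have D38 : (lift0 γ β ⊓ lift1 γ β) ≠ lift0 γ δ :=
    (srne (show (lift0 γ δ) (⟨(a, a), γ.refl' a⟩ : Dup γ) (⟨(b, b), γ.refl' b⟩ : Dup γ) from hγδle hab)
      (show ¬ ((lift0 γ β ⊓ lift1 γ β)) (⟨(a, a), γ.refl' a⟩ : Dup γ) (⟨(b, b), γ.refl' b⟩ : Dup γ) from fun hh => hnab (show β a b ∧ β a b from hh).1)).symm
  have D45 : lift0 γ β ≠ lift1 γ β :=
    (srne (show (lift0 γ β) (⟨(a, b), hab⟩ : Dup γ) (⟨(a, a), γ.refl' a⟩ : Dup γ) from β.refl' a)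
      (show ¬ (lift1 γ β) (⟨(a, b), hab⟩ : Dup γ) (⟨(a, a), γ.refl' a⟩ : Dup γ) from fun hh => hnba (show β b a from hh)))
  have D46 : lift0 γ β ≠ lift0 γ γ :=
    (srne (show (lift0 γ β) (⟨(u, u), γ.refl' u⟩ : Dup γ) (⟨(v, v), γ.refl' v⟩ : Dup γ) from huv)
      (show ¬ (lift0 γ γ) (⟨(u, u), γ.refl' u⟩ : Dup γ) (⟨(v, v), γ.refl' v⟩ : Dup γ) from fun hh => hnγuv (show γ u v from hh)))
  have D47 : lift0 γ β ≠ lift0 γ α :=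
    (srne (show (lift0 γ β) (⟨(u, u), γ.refl' u⟩ : Dup γ) (⟨(v, v), γ.refl' v⟩ : Dup γ) from huv)
      (show ¬ (lift0 γ α) (⟨(u, u), γ.refl' u⟩ : Dup γ) (⟨(v, v), γ.refl' v⟩ : Dup γ) from fun hh => hnαuv (show α u v from hh)))
  have D48 : lift0 γ β ≠ lift0 γ δ :=
    (srne (show (lift0 γ δ) (⟨(a, a), γ.refl' a⟩ : Dup γ) (⟨(b, b), γ.refl' b⟩ : Dup γ) from hγδle hab)
      (show ¬ (lift0 γ β) (⟨(a, a), γ.refl' a⟩ : Dup γ) (⟨(b, b), γ.refl' b⟩ : Dup γ) from fun hh => hnab (show β a b from hh))).symm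
  have D56 : lift1 γ β ≠ lift0 γ γ :=
    (srne (show (lift1 γ β) (⟨(u, u), γ.refl' u⟩ : Dup γ) (⟨(v, v), γ.refl' v⟩ : Dup γ) from huv)
      (show ¬ (lift0 γ γ) (⟨(u, u), γ.refl' u⟩ : Dup γ) (⟨(v, v), γ.refl' v⟩ : Dup γ) from fun hh => hnγuv (show γ u v from hh)))
  have D57 : lift1 γ β ≠ lift0 γ α :=
    (srne (show (lift1 γ β) (⟨(u, u), γ.refl' u⟩ : Dup γ) (⟨(v, v), γ.refl' v⟩ : Dup γ) from huv)
      (show ¬ (lift0 γ α) (⟨(u, u), γ.refl' u⟩ : Dup γ) (⟨(v, v), γ.refl' v⟩ : Dup γ) from fun hh => hnαuv (show α u v from hh)))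
  have D58 : lift1 γ β ≠ lift0 γ δ :=
    (srne (show (lift0 γ δ) (⟨(a, a), γ.refl' a⟩ : Dup γ) (⟨(b, b), γ.refl' b⟩ : Dup γ) from hγδle hab)
      (show ¬ (lift1 γ β) (⟨(a, a), γ.refl' a⟩ : Dup γ) (⟨(b, b), γ.refl' b⟩ : Dup γ) from fun hh => hnab (show β a b from hh))).symm
  have D67 : lift0 γ γ ≠ lift0 γ α :=
    (srne (show (lift0 γ α) (⟨(c, c), γ.refl' c⟩ : Dup γ) (⟨(d, d), γ.refl' d⟩ : Dup γ) from hcd)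
      (show ¬ (lift0 γ γ) (⟨(c, c), γ.refl' c⟩ : Dup γ) (⟨(d, d), γ.refl' d⟩ : Dup γ) from fun hh => hncd (show γ c d from hh))).symm
  have D68 : lift0 γ γ ≠ lift0 γ δ :=
    (srne (show (lift0 γ δ) (⟨(c, c), γ.refl' c⟩ : Dup γ) (⟨(d, d), γ.refl' d⟩ : Dup γ) from hαδle hcd)
      (show ¬ (lift0 γ γ) (⟨(c, c), γ.refl' c⟩ : Dup γ) (⟨(d, d), γ.refl' d⟩ : Dup γ) from fun hh => hncd (show γ c d from hh))).symm
  have D78 : lift0 γ α ≠ lift0 γ δ :=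
    (srne (show (lift0 γ δ) (⟨(e, e), γ.refl' e⟩ : Dup γ) (⟨(f, f), γ.refl' f⟩ : Dup γ) from hef)
      (show ¬ (lift0 γ α) (⟨(e, e), γ.refl' e⟩ : Dup γ) (⟨(f, f), γ.refl' f⟩ : Dup γ) from fun hh => hnef (show α e f from hh))).symm
  refine ⟨c1, c2, c3, c4, c5, c6, c7, c8, c9, c10, c11, c12, c13, ?_, ?_⟩
  · refine List.Pairwise.cons ?_ (List.Pairwise.cons ?_ (List.Pairwise.cons ?_ (List.Pairwise.cons ?_ (List.Pairwise.cons ?_ (List.Pairwise.cons ?_ (List.Pairwise.cons ?_ (List.Pairwise.cons ?_ (List.Pairwise.cons ?_ List.Pairwise.nil))))))))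
    · intro z hz
      simp only [List.mem_cons, List.not_mem_nil, or_false] at hz
      rcases hz with rfl|rfl|rfl|rfl|rfl|rfl|rfl|rfl
      · exact D01
      · exact D02
      · exact D03
      · exact D04
      · exact D05
      · exact D06
      · exact D07
      · exact D08
    · intro z hz
      simp only [List.mem_cons, List.not_mem_nil, or_false] at hz
      rcases hz with rfl|rfl|rfl|rfl|rfl|rfl|rfl
      · exact D12
      · exact D13
      · exact D14
      · exact D15
      · exact D16
      · exact D17
      · exact D18
    · intro z hz
      simp only [List.mem_cons, List.not_mem_nil, or_false] at hz
      rcases hz with rfl|rfl|rfl|rfl|rfl|rfl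
      · exact D23
      · exact D24
      · exact D25
      · exact D26
      · exact D27
      · exact D28
    · intro z hz
      simp only [List.mem_cons, List.not_mem_nil, or_false] at hz
      rcases hz with rfl|rfl|rfl|rfl|rfl
      · exact D34
      · exact D35
      · exact D36
      · exact D37
      · exact D38
    · intro z hz
      simp only [List.mem_cons, List.not_mem_nil, or_false] at hz
      rcases hz with rfl|rfl|rfl|rfl
      · exact D45
      · exact D46
      · exact D47
      · exact D48
    · intro z hz
      simp only [List.mem_cons, List.not_mem_nil, or_false] at hz
      rcases hz with rfl|rfl|rfl
      · exact D56
      · exact D57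
      · exact D58
    · intro z hz
      simp only [List.mem_cons, List.not_mem_nil, or_false] at hz
      rcases hz with rfl|rfl
      · exact D67
      · exact D68
    · intro z hz
      simp only [List.mem_cons, List.not_mem_nil, or_false] at hz
      rcases hz with rfl
      · exact D78
    · intro z hz; exact absurd hz List.not_mem_nil
  · intro x hx y hy
    have m0 : (⊥ : Setoid (Dup γ)) ∈ ({⊥, ker0 γ, ker1 γ, lift0 γ β ⊓ lift1 γ β,
        lift0 γ β, lift1 γ β, lift0 γ γ, lift0 γ α, lift0 γ δ} : Set (Setoid (Dup γ))) := Set.mem_insert _ _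
    have m1 : ker0 γ ∈ ({⊥, ker0 γ, ker1 γ, lift0 γ β ⊓ lift1 γ β,
        lift0 γ β, lift1 γ β, lift0 γ γ, lift0 γ α, lift0 γ δ} : Set (Setoid (Dup γ))) := Set.mem_insert_of_mem _ (Set.mem_insert _ _)
    have m2 : ker1 γ ∈ ({⊥, ker0 γ, ker1 γ, lift0 γ β ⊓ lift1 γ β,
        lift0 γ β, lift1 γ β, lift0 γ γ, lift0 γ α, lift0 γ δ} : Set (Setoid (Dup γ))) := Set.mem_insert_of_mem _ (Set.mem_insert_of_mem _ (Set.mem_insert _ _))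
    have m3 : lift0 γ β ⊓ lift1 γ β ∈ ({⊥, ker0 γ, ker1 γ, lift0 γ β ⊓ lift1 γ β,
        lift0 γ β, lift1 γ β, lift0 γ γ, lift0 γ α, lift0 γ δ} : Set (Setoid (Dup γ))) := Set.mem_insert_of_mem _ (Set.mem_insert_of_mem _ (Set.mem_insert_of_mem _ (Set.mem_insert _ _)))
    have m4 : lift0 γ β ∈ ({⊥, ker0 γ, ker1 γ, lift0 γ β ⊓ lift1 γ β,
        lift0 γ β, lift1 γ β, lift0 γ γ, lift0 γ α, lift0 γ δ} : Set (Setoid (Dup γ))) := Set.mem_insert_of_mem _ (Set.mem_insert_of_mem _ (Set.mem_insert_of_mem _ (Set.mem_insert_of_mem _ (Set.mem_insert _ _))))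
    have m5 : lift1 γ β ∈ ({⊥, ker0 γ, ker1 γ, lift0 γ β ⊓ lift1 γ β,
        lift0 γ β, lift1 γ β, lift0 γ γ, lift0 γ α, lift0 γ δ} : Set (Setoid (Dup γ))) := Set.mem_insert_of_mem _ (Set.mem_insert_of_mem _ (Set.mem_insert_of_mem _ (Set.mem_insert_of_mem _ (Set.mem_insert_of_mem _ (Set.mem_insert _ _)))))
    have m6 : lift0 γ γ ∈ ({⊥, ker0 γ, ker1 γ, lift0 γ β ⊓ lift1 γ β,
        lift0 γ β, lift1 γ β, lift0 γ γ, lift0 γ α, lift0 γ δ} : Set (Setoid (Dup γ))) := Set.mem_insert_of_mem _ (Set.mem_insert_of_mem _ (Set.mem_insert_of_mem _ (Set.mem_insert_of_mem _ (Set.mem_insert_of_mem _ (Set.mem_insert_of_mem _ (Set.mem_insert _ _))))))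
    have m7 : lift0 γ α ∈ ({⊥, ker0 γ, ker1 γ, lift0 γ β ⊓ lift1 γ β,
        lift0 γ β, lift1 γ β, lift0 γ γ, lift0 γ α, lift0 γ δ} : Set (Setoid (Dup γ))) := Set.mem_insert_of_mem _ (Set.mem_insert_of_mem _ (Set.mem_insert_of_mem _ (Set.mem_insert_of_mem _ (Set.mem_insert_of_mem _ (Set.mem_insert_of_mem _ (Set.mem_insert_of_mem _ (Set.mem_insert _ _)))))))
    have m8 : lift0 γ δ ∈ ({⊥, ker0 γ, ker1 γ, lift0 γ β ⊓ lift1 γ β,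
        lift0 γ β, lift1 γ β, lift0 γ γ, lift0 γ α, lift0 γ δ} : Set (Setoid (Dup γ))) := Set.mem_insert_of_mem _ (Set.mem_insert_of_mem _ (Set.mem_insert_of_mem _ (Set.mem_insert_of_mem _ (Set.mem_insert_of_mem _ (Set.mem_insert_of_mem _ (Set.mem_insert_of_mem _ (Set.mem_insert_of_mem _ (Set.mem_singleton _))))))))
    simp only [Set.mem_insert_iff, Set.mem_singleton_iff] at hx hy
    rcases hx with rfl|rfl|rfl|rfl|rfl|rfl|rfl|rfl|rfl
    · rcases hy with rfl|rfl|rfl|rfl|rfl|rfl|rfl|rfl|rfl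
      · exact ⟨by rw [inf_idem]; exact m0, by rw [sup_idem]; exact m0⟩
      · exact ⟨by rw [inf_eq_left.mpr bot_le]; exact m0, by rw [sup_eq_right.mpr bot_le]; exact m1⟩
      · exact ⟨by rw [inf_eq_left.mpr bot_le]; exact m0, by rw [sup_eq_right.mpr bot_le]; exact m2⟩
      · exact ⟨by rw [inf_eq_left.mpr bot_le]; exact m0, by rw [sup_eq_right.mpr bot_le]; exact m3⟩
      · exact ⟨by rw [inf_eq_left.mpr bot_le]; exact m0, by rw [sup_eq_right.mpr bot_le]; exact m4⟩
      · exact ⟨by rw [inf_eq_left.mpr bot_le]; exact m0, by rw [sup_eq_right.mpr bot_le]; exact m5⟩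
      · exact ⟨by rw [inf_eq_left.mpr bot_le]; exact m0, by rw [sup_eq_right.mpr bot_le]; exact m6⟩
      · exact ⟨by rw [inf_eq_left.mpr bot_le]; exact m0, by rw [sup_eq_right.mpr bot_le]; exact m7⟩
      · exact ⟨by rw [inf_eq_left.mpr bot_le]; exact m0, by rw [sup_eq_right.mpr bot_le]; exact m8⟩
    · rcases hy with rfl|rfl|rfl|rfl|rfl|rfl|rfl|rfl|rfl
      · exact ⟨by rw [inf_eq_right.mpr bot_le]; exact m0, by rw [sup_eq_left.mpr bot_le]; exact m1⟩
      · exact ⟨by rw [inf_idem]; exact m1, by rw [sup_idem]; exact m1⟩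
      · exact ⟨by rw [iq12]; exact m0, by rw [sq12]; exact m6⟩
      · exact ⟨by rw [iq13]; exact m0, by rw [sq13]; exact m4⟩
      · exact ⟨by rw [inf_eq_left.mpr le14]; exact m1, by rw [sup_eq_right.mpr le14]; exact m4⟩
      · exact ⟨by rw [iq15]; exact m0, by rw [sq15]; exact m8⟩
      · exact ⟨by rw [inf_eq_left.mpr le16]; exact m1, by rw [sup_eq_right.mpr le16]; exact m6⟩
      · exact ⟨by rw [inf_eq_left.mpr le17]; exact m1, by rw [sup_eq_right.mpr le17]; exact m7⟩
      · exact ⟨by rw [inf_eq_left.mpr le18]; exact m1, by rw [sup_eq_right.mpr le18]; exact m8⟩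
    · rcases hy with rfl|rfl|rfl|rfl|rfl|rfl|rfl|rfl|rfl
      · exact ⟨by rw [inf_eq_right.mpr bot_le]; exact m0, by rw [sup_eq_left.mpr bot_le]; exact m2⟩
      · exact ⟨by rw [inf_comm (ker1 γ) (ker0 γ), iq12]; exact m0, by rw [sup_comm (ker1 γ) (ker0 γ), sq12]; exact m6⟩
      · exact ⟨by rw [inf_idem]; exact m2, by rw [sup_idem]; exact m2⟩
      · exact ⟨by rw [iq23]; exact m0, by rw [sq23]; exact m5⟩
      · exact ⟨by rw [iq24]; exact m0, by rw [sq24]; exact m8⟩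
      · exact ⟨by rw [inf_eq_left.mpr le25]; exact m2, by rw [sup_eq_right.mpr le25]; exact m5⟩
      · exact ⟨by rw [inf_eq_left.mpr le26]; exact m2, by rw [sup_eq_right.mpr le26]; exact m6⟩
      · exact ⟨by rw [inf_eq_left.mpr le27]; exact m2, by rw [sup_eq_right.mpr le27]; exact m7⟩
      · exact ⟨by rw [inf_eq_left.mpr le28]; exact m2, by rw [sup_eq_right.mpr le28]; exact m8⟩
    · rcases hy with rfl|rfl|rfl|rfl|rfl|rfl|rfl|rfl|rfl
      · exact ⟨by rw [inf_eq_right.mpr bot_le]; exact m0, by rw [sup_eq_left.mpr bot_le]; exact m3⟩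
      · exact ⟨by rw [inf_comm ((lift0 γ β ⊓ lift1 γ β)) (ker0 γ), iq13]; exact m0, by rw [sup_comm ((lift0 γ β ⊓ lift1 γ β)) (ker0 γ), sq13]; exact m4⟩
      · exact ⟨by rw [inf_comm ((lift0 γ β ⊓ lift1 γ β)) (ker1 γ), iq23]; exact m0, by rw [sup_comm ((lift0 γ β ⊓ lift1 γ β)) (ker1 γ), sq23]; exact m5⟩
      · exact ⟨by rw [inf_idem]; exact m3, by rw [sup_idem]; exact m3⟩
      · exact ⟨by rw [inf_eq_left.mpr le34]; exact m3, by rw [sup_eq_right.mpr le34]; exact m4⟩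
      · exact ⟨by rw [inf_eq_left.mpr le35]; exact m3, by rw [sup_eq_right.mpr le35]; exact m5⟩
      · exact ⟨by rw [iq36]; exact m0, by rw [sq36]; exact m8⟩
      · exact ⟨by rw [iq37]; exact m0, by rw [sq37]; exact m8⟩
      · exact ⟨by rw [inf_eq_left.mpr le38]; exact m3, by rw [sup_eq_right.mpr le38]; exact m8⟩
    · rcases hy with rfl|rfl|rfl|rfl|rfl|rfl|rfl|rfl|rfl
      · exact ⟨by rw [inf_eq_right.mpr bot_le]; exact m0, by rw [sup_eq_left.mpr bot_le]; exact m4⟩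
      · exact ⟨by rw [inf_eq_right.mpr le14]; exact m1, by rw [sup_eq_left.mpr le14]; exact m4⟩
      · exact ⟨by rw [inf_comm (lift0 γ β) (ker1 γ), iq24]; exact m0, by rw [sup_comm (lift0 γ β) (ker1 γ), sq24]; exact m8⟩
      · exact ⟨by rw [inf_eq_right.mpr le34]; exact m3, by rw [sup_eq_left.mpr le34]; exact m4⟩
      · exact ⟨by rw [inf_idem]; exact m4, by rw [sup_idem]; exact m4⟩
      · exact ⟨m3, by rw [sq45]; exact m8⟩
      · exact ⟨by rw [iq46]; exact m1, by rw [sq46]; exact m8⟩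
      · exact ⟨by rw [iq47]; exact m1, by rw [sq47]; exact m8⟩
      · exact ⟨by rw [inf_eq_left.mpr le48]; exact m4, by rw [sup_eq_right.mpr le48]; exact m8⟩
    · rcases hy with rfl|rfl|rfl|rfl|rfl|rfl|rfl|rfl|rfl
      · exact ⟨by rw [inf_eq_right.mpr bot_le]; exact m0, by rw [sup_eq_left.mpr bot_le]; exact m5⟩
      · exact ⟨by rw [inf_comm (lift1 γ β) (ker0 γ), iq15]; exact m0, by rw [sup_comm (lift1 γ β) (ker0 γ), sq15]; exact m8⟩
      · exact ⟨by rw [inf_eq_right.mpr le25]; exact m2, by rw [sup_eq_left.mpr le25]; exact m5⟩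
      · exact ⟨by rw [inf_eq_right.mpr le35]; exact m3, by rw [sup_eq_left.mpr le35]; exact m5⟩
      · exact ⟨by rw [inf_comm (lift1 γ β) (lift0 γ β)]; exact m3, by rw [sup_comm (lift1 γ β) (lift0 γ β), sq45]; exact m8⟩
      · exact ⟨by rw [inf_idem]; exact m5, by rw [sup_idem]; exact m5⟩
      · exact ⟨by rw [iq56]; exact m2, by rw [sq56]; exact m8⟩
      · exact ⟨by rw [iq57]; exact m2, by rw [sq57]; exact m8⟩
      · exact ⟨by rw [inf_eq_left.mpr le58]; exact m5, by rw [sup_eq_right.mpr le58]; exact m8⟩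
    · rcases hy with rfl|rfl|rfl|rfl|rfl|rfl|rfl|rfl|rfl
      · exact ⟨by rw [inf_eq_right.mpr bot_le]; exact m0, by rw [sup_eq_left.mpr bot_le]; exact m6⟩
      · exact ⟨by rw [inf_eq_right.mpr le16]; exact m1, by rw [sup_eq_left.mpr le16]; exact m6⟩
      · exact ⟨by rw [inf_eq_right.mpr le26]; exact m2, by rw [sup_eq_left.mpr le26]; exact m6⟩
      · exact ⟨by rw [inf_comm (lift0 γ γ) ((lift0 γ β ⊓ lift1 γ β)), iq36]; exact m0, by rw [sup_comm (lift0 γ γ) ((lift0 γ β ⊓ lift1 γ β)), sq36]; exact m8⟩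
      · exact ⟨by rw [inf_comm (lift0 γ γ) (lift0 γ β), iq46]; exact m1, by rw [sup_comm (lift0 γ γ) (lift0 γ β), sq46]; exact m8⟩
      · exact ⟨by rw [inf_comm (lift0 γ γ) (lift1 γ β), iq56]; exact m2, by rw [sup_comm (lift0 γ γ) (lift1 γ β), sq56]; exact m8⟩
      · exact ⟨by rw [inf_idem]; exact m6, by rw [sup_idem]; exact m6⟩
      · exact ⟨by rw [inf_eq_left.mpr le67]; exact m6, by rw [sup_eq_right.mpr le67]; exact m7⟩
      · exact ⟨by rw [inf_eq_left.mpr le68]; exact m6, by rw [sup_eq_right.mpr le68]; exact m8⟩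
    · rcases hy with rfl|rfl|rfl|rfl|rfl|rfl|rfl|rfl|rfl
      · exact ⟨by rw [inf_eq_right.mpr bot_le]; exact m0, by rw [sup_eq_left.mpr bot_le]; exact m7⟩
      · exact ⟨by rw [inf_eq_right.mpr le17]; exact m1, by rw [sup_eq_left.mpr le17]; exact m7⟩
      · exact ⟨by rw [inf_eq_right.mpr le27]; exact m2, by rw [sup_eq_left.mpr le27]; exact m7⟩
      · exact ⟨by rw [inf_comm (lift0 γ α) ((lift0 γ β ⊓ lift1 γ β)), iq37]; exact m0, by rw [sup_comm (lift0 γ α) ((lift0 γ β ⊓ lift1 γ β)), sq37]; exact m8⟩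
      · exact ⟨by rw [inf_comm (lift0 γ α) (lift0 γ β), iq47]; exact m1, by rw [sup_comm (lift0 γ α) (lift0 γ β), sq47]; exact m8⟩
      · exact ⟨by rw [inf_comm (lift0 γ α) (lift1 γ β), iq57]; exact m2, by rw [sup_comm (lift0 γ α) (lift1 γ β), sq57]; exact m8⟩
      · exact ⟨by rw [inf_eq_right.mpr le67]; exact m6, by rw [sup_eq_left.mpr le67]; exact m7⟩
      · exact ⟨by rw [inf_idem]; exact m7, by rw [sup_idem]; exact m7⟩
      · exact ⟨by rw [inf_eq_left.mpr le78]; exact m7, by rw [sup_eq_right.mpr le78]; exact m8⟩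
    · rcases hy with rfl|rfl|rfl|rfl|rfl|rfl|rfl|rfl|rfl
      · exact ⟨by rw [inf_eq_right.mpr bot_le]; exact m0, by rw [sup_eq_left.mpr bot_le]; exact m8⟩
      · exact ⟨by rw [inf_eq_right.mpr le18]; exact m1, by rw [sup_eq_left.mpr le18]; exact m8⟩
      · exact ⟨by rw [inf_eq_right.mpr le28]; exact m2, by rw [sup_eq_left.mpr le28]; exact m8⟩
      · exact ⟨by rw [inf_eq_right.mpr le38]; exact m3, by rw [sup_eq_left.mpr le38]; exact m8⟩
      · exact ⟨by rw [inf_eq_right.mpr le48]; exact m4, by rw [sup_eq_left.mpr le48]; exact m8⟩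
      · exact ⟨by rw [inf_eq_right.mpr le58]; exact m5, by rw [sup_eq_left.mpr le58]; exact m8⟩
      · exact ⟨by rw [inf_eq_right.mpr le68]; exact m6, by rw [sup_eq_left.mpr le68]; exact m8⟩
      · exact ⟨by rw [inf_eq_right.mpr le78]; exact m7, by rw [sup_eq_left.mpr le78]; exact m8⟩
      · exact ⟨by rw [inf_idem]; exact m8, by rw [sup_idem]; exact m8⟩
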